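/- arXiv:1601.01568 — 2 statements merged into one kernel-verified Lean document; each statement's English description precedes it below -/
import Mathlib

section
/- Sample error estimate: in the weighted regularized least squares setting with noisy data y_i = f*(x_i) + η_i where the η_i are independent, mean zero, with variances bounded by σ², for every λ > 0 and every 0 < δ < 1, with probability at least 1 − δ, ‖f_{z,λ} − f_{x,λ}‖_K ≤ ‖w‖_{ℝ^m} σ κ / (λ √δ), where f_{z,λ} = (S* D_w S + λI)^{-1} S* D_w y and f_{x,λ} = (S* D_w S + λI)^{-1} S* D_w (S f*). -/
open MeasureTheory ProbabilityTheory
open scoped RealInnerProductSpace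

set_option maxHeartbeats 2000000 in
/-- Sample error estimate. With noisy data `yᵢ = f*(xᵢ) + ηᵢ` (independent,
mean zero, variances ≤ σ²), for every `λ > 0` and `0 < δ < 1`, with probability `1 − δ`,
`‖f_{z,λ} − f_{x,λ}‖_K ≤ ‖w‖ σ κ / (λ √δ)`, where
`f_{z,λ} = (S*D_wS + λI)⁻¹ S*D_w y` and `f_{x,λ} = (S*D_wS + λI)⁻¹ S*D_w (S f*)`. -/
theorem sample_error_estimate {X H Ω : Type*}
    [NormedAddCommGroup H] [InnerProductSpace ℝ H] [CompleteSpace H]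
    [MeasurableSpace Ω] (μ : Measure Ω) [IsProbabilityMeasure μ]
    (toFun : H → X → ℝ) (k : X → H) (K : X → X → ℝ) (κ : ℝ)
    (hK : ∀ x y : X, K x y = ⟪k x, k y⟫)
    (hrepro : ∀ (f : H) (x : X), ⟪k x, f⟫ = toFun f x)
    (hκ : ∀ x : X, K x x ≤ κ ^ 2) (hκ0 : 0 ≤ κ)
    {m : ℕ} (x : Fin m → X) (hx : Function.Injective x)
    (w : Fin m → ℝ) (hw : ∀ i, 0 ≤ w i)
    (lam : ℝ) (hlam : 0 < lam)
    (S : H →L[ℝ] EuclideanSpace ℝ (Fin m))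
    (hS : ∀ (f : H) (i : Fin m), S f i = toFun f (x i))
    (Dw : EuclideanSpace ℝ (Fin m) →L[ℝ] EuclideanSpace ℝ (Fin m))
    (hDw : ∀ (c : EuclideanSpace ℝ (Fin m)) (i : Fin m), Dw c i = w i * c i)
    (B : H →L[ℝ] H)
    (hB₁ : (((ContinuousLinearMap.adjoint S).comp (Dw.comp S)) +
        lam • ContinuousLinearMap.id ℝ H).comp B = ContinuousLinearMap.id ℝ H)
    (hB₂ : B.comp (((ContinuousLinearMap.adjoint S).comp (Dw.comp S)) +
        lam • ContinuousLinearMap.id ℝ H) = ContinuousLinearMap.id ℝ H)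
    (η : Fin m → Ω → ℝ)
    (hind : iIndepFun η μ)
    (hmeas : ∀ i, Measurable (η i))
    (hL2 : ∀ i, MemLp (η i) 2 μ)
    (hmean : ∀ i, ∫ ω, η i ω ∂μ = 0)
    (σ : ℝ) (hσ0 : 0 ≤ σ)
    (hvar : ∀ i, ∫ ω, (η i ω) ^ 2 ∂μ ≤ σ ^ 2)
    (fstar : H)
    (δ : ℝ) (hδ0 : 0 < δ) (hδ1 : δ < 1) :
    ENNReal.ofReal (1 - δ) ≤
      μ {ω | ‖B ((ContinuousLinearMap.adjoint S)
                (Dw (WithLp.toLp 2 (fun i => toFun fstar (x i) + η i ω) : EuclideanSpace ℝ (Fin m)))) -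
              B ((ContinuousLinearMap.adjoint S) (Dw (S fstar)))‖ ≤
          Real.sqrt (∑ i, (w i) ^ 2) * σ * κ / (lam * Real.sqrt δ)} := by
  classical
  set t : ℝ := Real.sqrt (∑ i, (w i) ^ 2) * σ * κ / (lam * Real.sqrt δ) with ht
  -- adjoint formula
  have hadj : ∀ u : EuclideanSpace ℝ (Fin m),
      (ContinuousLinearMap.adjoint S) u = ∑ i, u i • k (x i) := by
    intro u
    apply ext_inner_right ℝ
    intro f
    rw [ContinuousLinearMap.adjoint_inner_left]
    rw [sum_inner]
    simp only [real_inner_smul_left, hrepro, ← hS]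
    rw [PiLp.inner_apply]
    simp [RCLike.inner_apply, mul_comm]
  -- Z
  set ηv : Ω → EuclideanSpace ℝ (Fin m) := fun ω => WithLp.toLp 2 (fun i => η i ω) with hηv
  set Z : Ω → H := fun ω => ∑ i, (w i * η i ω) • k (x i) with hZdef
  have hZ : ∀ ω, (ContinuousLinearMap.adjoint S) (Dw (ηv ω)) = Z ω := by
    intro ω
    rw [hadj]
    simp [hDw, hηv, hZdef]
  -- bound for B
  have hBnorm : ∀ g : H, lam * ‖B g‖ ≤ ‖g‖ := by
    intro g
    set f := B g with hf
    have hfg : (ContinuousLinearMap.adjoint S) (Dw (S f)) + lam • f = g := by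
      have := congrArg (fun T => T g) hB₁
      simpa using this
    have hApos : 0 ≤ ⟪(ContinuousLinearMap.adjoint S) (Dw (S f)), f⟫ := by
      rw [ContinuousLinearMap.adjoint_inner_left, PiLp.inner_apply]
      apply Finset.sum_nonneg
      intro i _
      simp only [RCLike.inner_apply, conj_trivial, hDw]
      nlinarith [hw i, sq_nonneg (S f i)]
    have hgf : lam * (‖f‖ * ‖f‖) ≤ ⟪g, f⟫ := by
      rw [← hfg, inner_add_left, real_inner_smul_left, real_inner_self_eq_norm_mul_norm]
      nlinarith [hApos]
    have := real_inner_le_norm g f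
    rcases eq_or_lt_of_le (norm_nonneg f) with h0 | h0
    · rw [← h0]; simp [norm_nonneg g]
    · have : lam * ‖f‖ * ‖f‖ ≤ ‖g‖ * ‖f‖ := by nlinarith
      exact le_of_mul_le_mul_right (by linarith) h0
  -- coefficients and expansion of ‖Z‖²
  set c : Fin m → Fin m → ℝ := fun i j => (w i * w j) * ⟪k (x i), k (x j)⟫ with hc
  have hZnorm : ∀ ω, ‖Z ω‖ ^ 2 = ∑ i, ∑ j, c i j * (η i ω * η j ω) := by
    intro ω
    rw [← real_inner_self_eq_norm_sq, hZdef]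
    rw [sum_inner]
    apply Finset.sum_congr rfl
    intro i _
    rw [inner_sum]
    apply Finset.sum_congr rfl
    intro j _
    rw [real_inner_smul_left, real_inner_smul_right, hc]
    ring
  -- integrability of products
  have hprod_int : ∀ i j : Fin m, Integrable (fun ω => η i ω * η j ω) μ := by
    intro i j
    have := L2.integrable_inner (𝕜 := ℝ) ((hL2 i).toLp (η i)) ((hL2 j).toLp (η j))
    refine this.congr ?_
    filter_upwards [(hL2 i).coeFn_toLp, (hL2 j).coeFn_toLp] with ω h1 h2
    simp [RCLike.inner_apply, h1, h2, mul_comm]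
  have hg_int : Integrable (fun ω => ‖Z ω‖ ^ 2) μ := by
    have : Integrable (fun ω => ∑ i, ∑ j, c i j * (η i ω * η j ω)) μ := by
      apply integrable_finset_sum
      intro i _
      apply integrable_finset_sum
      intro j _
      exact (hprod_int i j).const_mul _
    exact this.congr (Filter.Eventually.of_forall fun ω => (hZnorm ω).symm)
  -- cross terms vanish
  have hcross : ∀ i j : Fin m, i ≠ j → ∫ ω, η i ω * η j ω ∂μ = 0 := by
    intro i j hij
    have h := (hind.indepFun hij).integral_mul_eq_mul_integral (hmeas i).aestronglyMeasurable
      (hmeas j).aestronglyMeasurable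
    simpa [Pi.mul_apply, hmean i, hmean j] using h
  -- variance bound
  have hC : ∫ ω, ‖Z ω‖ ^ 2 ∂μ ≤ σ ^ 2 * κ ^ 2 * ∑ i, (w i) ^ 2 := by
    have heq : ∫ ω, ‖Z ω‖ ^ 2 ∂μ = ∑ i, ∑ j, c i j * ∫ ω, η i ω * η j ω ∂μ := by
      rw [integral_congr_ae (Filter.Eventually.of_forall hZnorm)]
      rw [integral_finset_sum _ (fun i _ => integrable_finset_sum _
        (fun j _ => (hprod_int i j).const_mul _))]
      apply Finset.sum_congr rfl
      intro i _
      rw [integral_finset_sum _ (fun j _ => (hprod_int i j).const_mul _)]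
      apply Finset.sum_congr rfl
      intro j _
      exact integral_const_mul _ _
    rw [heq]
    have hdiag : ∀ i : Fin m, ∑ j, c i j * ∫ ω, η i ω * η j ω ∂μ
        = c i i * ∫ ω, (η i ω) ^ 2 ∂μ := by
      intro i
      rw [Finset.sum_eq_single i]
      · congr 1
        apply integral_congr_ae
        filter_upwards with ω
        ring
      · intro j _ hji
        rw [hcross i j (Ne.symm hji), mul_zero]
      · simp
    rw [Finset.sum_congr rfl (fun i _ => hdiag i), Finset.mul_sum]
    apply Finset.sum_le_sum
    intro i _
    have hvar_nonneg : 0 ≤ ∫ ω, (η i ω) ^ 2 ∂μ :=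
      integral_nonneg fun ω => sq_nonneg _
    have hkk : (0:ℝ) ≤ ⟪k (x i), k (x i)⟫ := real_inner_self_nonneg
    have hkk2 : ⟪k (x i), k (x i)⟫ ≤ κ ^ 2 := by rw [← hK]; exact hκ (x i)
    have hcii : c i i = w i ^ 2 * ⟪k (x i), k (x i)⟫ := by rw [hc]; ring
    rw [hcii]
    have h1 : w i ^ 2 * ⟪k (x i), k (x i)⟫ * ∫ ω, (η i ω) ^ 2 ∂μ
        ≤ w i ^ 2 * κ ^ 2 * σ ^ 2 := by
      apply mul_le_mul
      · exact mul_le_mul_of_nonneg_left hkk2 (sq_nonneg (w i))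
      · exact hvar i
      · exact hvar_nonneg
      · positivity
    nlinarith [h1]
  -- the estimated function and its norm measurability
  set Yf : Ω → H := fun ω => B (Z ω) with hYf
  have hpt : ∀ ω, lam * ‖Yf ω‖ ≤ ‖Z ω‖ := fun ω => hBnorm (Z ω)
  have hvecmeas : Measurable (fun ω => (WithLp.toLp 2 (fun i => η i ω) : EuclideanSpace ℝ (Fin m))) :=
    (PiLp.continuous_toLp (p := 2) (β := fun _ : Fin m => ℝ)).measurable.comp (measurable_pi_lambda _ fun i => hmeas i)
  have hcontF : Continuous (fun v : EuclideanSpace ℝ (Fin m) =>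
      ‖B (∑ i, (w i * v i) • k (x i))‖) := by
    apply Continuous.norm
    apply B.continuous.comp
    apply continuous_finset_sum
    intro i _
    exact ((continuous_const.mul ((continuous_apply i).comp (PiLp.continuous_ofLp (p := 2) (β := fun _ : Fin m => ℝ)))).smul continuous_const)
  have hYnormmeas : Measurable fun ω => ‖Yf ω‖ := by
    have : (fun ω => ‖Yf ω‖) = (fun v : EuclideanSpace ℝ (Fin m) =>
        ‖B (∑ i, (w i * v i) • k (x i))‖) ∘ (fun ω => WithLp.toLp 2 (fun i => η i ω)) := rfl
    rw [this]
    exact hcontF.measurable.comp hvecmeas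
  have hbadmeas : MeasurableSet {ω | t < ‖Yf ω‖} :=
    measurableSet_lt measurable_const hYnormmeas
  have hsum0 : (0:ℝ) ≤ ∑ i, (w i) ^ 2 := Finset.sum_nonneg fun i _ => sq_nonneg _
  have hsq : (Real.sqrt (∑ i, (w i) ^ 2)) ^ 2 = ∑ i, (w i) ^ 2 := Real.sq_sqrt hsum0
  -- bad set has small probability
  have hbad : μ {ω | t < ‖Yf ω‖} ≤ ENNReal.ofReal δ := by
    by_cases hzero : Real.sqrt (∑ i, (w i) ^ 2) * σ * κ = 0
    · have ht0 : t = 0 := by rw [ht, hzero, zero_div]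
      have hC0 : σ ^ 2 * κ ^ 2 * ∑ i, (w i) ^ 2 = 0 := by
        have h2 : (Real.sqrt (∑ i, (w i) ^ 2) * σ * κ) ^ 2 = 0 := by rw [hzero]; ring
        rw [mul_pow, mul_pow, hsq] at h2
        linear_combination h2
      have hint0 : ∫ ω, ‖Z ω‖ ^ 2 ∂μ = 0 :=
        le_antisymm (hC.trans_eq hC0) (integral_nonneg fun ω => sq_nonneg _)
      have hae : ∀ᵐ ω ∂μ, ‖Z ω‖ ^ 2 = 0 := by
        have h := (integral_eq_zero_iff_of_nonneg (fun ω => sq_nonneg _) hg_int).mp hint0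
        filter_upwards [h] with ω hω using hω
      have hnull : μ {ω | ¬ (‖Z ω‖ ^ 2 = 0)} = 0 := ae_iff.mp hae
      have hsub : {ω | t < ‖Yf ω‖} ⊆ {ω | ¬ (‖Z ω‖ ^ 2 = 0)} := by
        intro ω hω h0
        have hZ0 : ‖Z ω‖ = 0 := pow_eq_zero_iff two_ne_zero |>.mp h0
        have h1 := hpt ω
        rw [hZ0] at h1
        simp only [Set.mem_setOf_eq, ht0] at hω
        nlinarith [mul_pos hlam hω]
      calc μ {ω | t < ‖Yf ω‖} ≤ μ {ω | ¬ (‖Z ω‖ ^ 2 = 0)} := measure_mono hsub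
        _ = 0 := hnull
        _ ≤ ENNReal.ofReal δ := zero_le
    · have hnum_pos : 0 < Real.sqrt (∑ i, (w i) ^ 2) * σ * κ := by
        rcases lt_of_le_of_ne (by positivity) (Ne.symm hzero) with h; exact h
      have hden : 0 < lam * Real.sqrt δ := by positivity
      have ht_pos : 0 < t := by rw [ht]; exact div_pos hnum_pos hden
      set ε : ℝ := lam ^ 2 * t ^ 2 with hε
      have hεval : ε = σ ^ 2 * κ ^ 2 * (∑ i, (w i) ^ 2) / δ := by
        rw [hε, ht, div_pow, mul_pow, mul_pow, mul_pow, hsq, Real.sq_sqrt hδ0.le]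
        field_simp
      have hεpos : 0 < ε := by positivity
      have hsub : {ω | t < ‖Yf ω‖} ⊆ {ω | ε ≤ ‖Z ω‖ ^ 2} := by
        intro ω hω
        simp only [Set.mem_setOf_eq] at hω ⊢
        have h1 := hpt ω
        have h2 : lam * t < lam * ‖Yf ω‖ := mul_lt_mul_of_pos_left hω hlam
        have h3 : lam * t ≤ ‖Z ω‖ := le_trans h2.le h1
        have h4 : 0 < lam * t := mul_pos hlam ht_pos
        rw [hε]
        nlinarith [h3, h4]
      have hmark := mul_meas_ge_le_integral_of_nonneg
        (Filter.Eventually.of_forall fun ω => sq_nonneg ‖Z ω‖) hg_int ε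
      have hεδ : σ ^ 2 * κ ^ 2 * (∑ i, (w i) ^ 2) = ε * δ := by
        rw [hεval]; field_simp
      have hμle : (μ {ω | ε ≤ ‖Z ω‖ ^ 2}).toReal ≤ δ := by
        have h3 : ε * (μ {ω | ε ≤ ‖Z ω‖ ^ 2}).toReal ≤ ε * δ := by
          calc ε * (μ {ω | ε ≤ ‖Z ω‖ ^ 2}).toReal ≤ ∫ ω, ‖Z ω‖ ^ 2 ∂μ := hmark
            _ ≤ σ ^ 2 * κ ^ 2 * ∑ i, (w i) ^ 2 := hC
            _ = ε * δ := hεδ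
        exact le_of_mul_le_mul_left h3 hεpos
      calc μ {ω | t < ‖Yf ω‖} ≤ μ {ω | ε ≤ ‖Z ω‖ ^ 2} := measure_mono hsub
        _ ≤ ENNReal.ofReal δ := by
          rw [← ENNReal.ofReal_toReal (measure_ne_top μ _)]
          exact ENNReal.ofReal_le_ofReal hμle
  -- rewrite the expression inside the goal
  have hexpr : ∀ ω, B ((ContinuousLinearMap.adjoint S)
        (Dw (WithLp.toLp 2 (fun i => toFun fstar (x i) + η i ω) : EuclideanSpace ℝ (Fin m)))) -
      B ((ContinuousLinearMap.adjoint S) (Dw (S fstar))) = Yf ω := by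
    intro ω
    have hv : (WithLp.toLp 2 (fun i => toFun fstar (x i) + η i ω) : EuclideanSpace ℝ (Fin m))
        = S fstar + ηv ω := by
      ext i
      simp [hS, PiLp.add_apply, hηv]
    rw [hv, map_add, map_add, map_add, hZ ω]
    abel
  have hset : {ω | ‖B ((ContinuousLinearMap.adjoint S)
        (Dw (WithLp.toLp 2 (fun i => toFun fstar (x i) + η i ω) : EuclideanSpace ℝ (Fin m)))) -
      B ((ContinuousLinearMap.adjoint S) (Dw (S fstar)))‖ ≤ t} = {ω | t < ‖Yf ω‖}ᶜ := by
    ext ω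
    simp only [Set.mem_setOf_eq, Set.mem_compl_iff, not_lt, hexpr ω]
  rw [hset, prob_compl_eq_one_sub hbadmeas]
  calc ENNReal.ofReal (1 - δ) = 1 - ENNReal.ofReal δ := by
        rw [ENNReal.ofReal_sub 1 hδ0.le, ENNReal.ofReal_one]
    _ ≤ 1 - μ {ω | t < ‖Yf ω‖} := tsub_le_tsub_left hbad 1
end

section
/- Integration error estimate: with X compact, ρ a finite strictly positive strongly continuous Borel measure on X, w_i = ρ(V_i) the Voronoi weights of the points x₁,…,x_m with fill distance h_x, and λ > 0, the functions f_{x,λ} = (S*D_wS + λI)^{-1}S*D_w S f* and f_λ = (L_K + λI)^{-1} L_K f* satisfy ‖f_{x,λ} − f_λ‖_{L^∞(X)} ≤ (C/λ) κ ‖f* − f_λ‖_K · h_x · ρ(X), where C depends on a Lipschitz bound for functions of the form u(y) K(·,y) with u ∈ H_K. -/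
open MeasureTheory
open scoped RealInnerProductSpace

/-- Integration error estimate. With `X` compact, `ρ` a finite strictly
positive strongly continuous Borel measure, Voronoi weights `wᵢ = ρ(Vᵢ)` for points with
fill distance `h_x`, and `λ > 0`, the functions `f_{x,λ} = (S*D_wS+λI)⁻¹S*D_w S f*` and
`f_λ = (L_K+λI)⁻¹L_K f*` satisfy
`‖f_{x,λ} − f_λ‖_{L^∞(X)} ≤ (C/λ) κ ‖f* − f_λ‖_K · h_x · ρ(X)`,
where `C` is a Lipschitz bound for the maps `y ↦ u(y)K(·,y)`, `u ∈ H_K`. -/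
theorem integration_error_estimate {X : Type*}
    [MetricSpace X] [CompactSpace X] [MeasurableSpace X] [BorelSpace X]
    (ρ : Measure X) [IsFiniteMeasure ρ] [ρ.IsOpenPosMeasure]
    {H : Type*} [NormedAddCommGroup H] [InnerProductSpace ℝ H] [CompleteSpace H]
    (toFun : H → X → ℝ) (k : X → H) (K : X → X → ℝ) (κ : ℝ)
    (hK : ∀ x y : X, K x y = ⟪k x, k y⟫)
    (hrepro : ∀ (f : H) (x : X), ⟪k x, f⟫ = toFun f x)
    (hκ : ∀ x : X, K x x ≤ κ ^ 2) (hκ0 : 0 ≤ κ)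
    (hcont : ∀ u : H, Continuous (toFun u))
    {m : ℕ} (xp : Fin m → X) (hxp : Function.Injective xp)
    -- Voronoi cells, their weights, and strong continuity of `ρ` across cell boundaries
    (V : Fin m → Set X)
    (hV : ∀ i, V i = {y : X | ∀ j, j ≠ i → dist (xp i) y < dist (xp j) y})
    (hbd : ρ (Set.univ \ ⋃ i, V i) = 0)
    (w : Fin m → ℝ) (hw : ∀ i, w i = (ρ (V i)).toReal)
    -- fill distance
    (h : ℝ) (hh0 : 0 ≤ h) (hfill : ∀ y : X, ∃ i, dist (xp i) y ≤ h)
    -- Lipschitz bound for `y ↦ u(y) K(·,y)`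
    (C0 : ℝ) (hC0 : 0 ≤ C0)
    (hLip : ∀ u : H, LipschitzWith (Real.toNNReal (C0 * ‖u‖))
      (fun y : X => toFun u y • k y))
    (lam : ℝ) (hlam : 0 < lam)
    (fstar : H)
    -- the sampling operator, the weight operator, and `(S*D_wS + λI)⁻¹`
    (S : H →L[ℝ] EuclideanSpace ℝ (Fin m))
    (hS : ∀ (f : H) (i : Fin m), S f i = toFun f (xp i))
    (Dw : EuclideanSpace ℝ (Fin m) →L[ℝ] EuclideanSpace ℝ (Fin m))
    (hDw : ∀ (c : EuclideanSpace ℝ (Fin m)) (i : Fin m), Dw c i = w i * c i)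
    (B : H →L[ℝ] H)
    (hB₁ : (((ContinuousLinearMap.adjoint S).comp (Dw.comp S)) +
        lam • ContinuousLinearMap.id ℝ H).comp B = ContinuousLinearMap.id ℝ H)
    (hB₂ : B.comp (((ContinuousLinearMap.adjoint S).comp (Dw.comp S)) +
        lam • ContinuousLinearMap.id ℝ H) = ContinuousLinearMap.id ℝ H)
    -- `f_λ = (L_K + λI)⁻¹ L_K f*`
    (flam : H)
    (hflam : ∀ t : X, lam * toFun flam t + (∫ y, K t y * toFun flam y ∂ρ) =
      ∫ y, K t y * toFun fstar y ∂ρ) :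
    ∀ t : X,
      |toFun (B ((ContinuousLinearMap.adjoint S) (Dw (S fstar)))) t - toFun flam t| ≤
        (C0 / lam) * κ * ‖fstar - flam‖ * h * (ρ Set.univ).toReal := by
  intro t
  set A : H →L[ℝ] H := (ContinuousLinearMap.adjoint S).comp (Dw.comp S) with hA
  set u : H := fstar - flam with hu
  set F : X → H := fun y => toFun u y • k y with hF
  set L : H := ∫ y, F y ∂ρ with hLdef
  set e : H := lam • flam - L with he
  -- norm of k
  have hkt : ∀ x : X, ‖k x‖ ≤ κ := by
    intro x
    have h1 : ⟪k x, k x⟫ ≤ κ ^ 2 := by rw [← hK]; exact hκ x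
    nlinarith [real_inner_self_eq_norm_sq (k x), norm_nonneg (k x)]
  -- Voronoi cells are open, measurable, pairwise disjoint, and h-close to their centers
  have hVopen : ∀ i, IsOpen (V i) := by
    intro i
    rw [hV]
    have : {y : X | ∀ j, j ≠ i → dist (xp i) y < dist (xp j) y} =
        ⋂ j, ⋂ (_ : j ≠ i), {y : X | dist (xp i) y < dist (xp j) y} := by
      ext y; simp [Set.mem_iInter]
    rw [this]
    refine isOpen_iInter_of_finite fun j => isOpen_iInter_of_finite fun _ => ?_
    exact isOpen_lt (continuous_const.dist continuous_id) (continuous_const.dist continuous_id)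
  have hmeasV : ∀ i, MeasurableSet (V i) := fun i => (hVopen i).measurableSet
  have hdisj : Pairwise (Function.onFun Disjoint V) := by
    intro i j hij
    rw [Function.onFun, Set.disjoint_left]
    intro y hyi hyj
    rw [hV] at hyi hyj
    have h1 := hyi j (Ne.symm hij)
    have h2 := hyj i hij
    linarith
  have hdistV : ∀ i, ∀ y ∈ V i, dist (xp i) y ≤ h := by
    intro i y hy
    obtain ⟨j, hj⟩ := hfill y
    rcases eq_or_ne j i with rfl | hji
    · exact hj
    · rw [hV] at hy
      exact le_of_lt (lt_of_lt_of_le (hy j hji) hj)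
  -- integrability
  have hFcont : Continuous F := (hLip u).continuous
  have hFint : Integrable F ρ :=
    hFcont.integrable_of_hasCompactSupport (HasCompactSupport.of_compactSpace F)
  have hKcont : ∀ x : X, Continuous (fun y => K x y) := by
    intro x
    have : (fun y => K x y) = toFun (k x) := by
      funext y; rw [hK, real_inner_comm, hrepro]
    rw [this]; exact hcont _
  have hintK : ∀ (x : X) (g : H), Integrable (fun y => K x y * toFun g y) ρ := by
    intro x g
    exact ((hKcont x).mul (hcont g)).integrable_of_hasCompactSupport
      (HasCompactSupport.of_compactSpace _)
  -- adjoint formula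
  have Sadj : ∀ c : EuclideanSpace ℝ (Fin m),
      ContinuousLinearMap.adjoint S c = ∑ i, c i • k (xp i) := by
    intro c
    apply ext_inner_right ℝ
    intro f
    rw [ContinuousLinearMap.adjoint_inner_left, sum_inner]
    simp only [real_inner_smul_left, hrepro, ← hS]
    rw [PiLp.inner_apply]
    simp [RCLike.inner_apply]
    exact Finset.sum_congr rfl fun i _ => mul_comm _ _
  -- positivity of A
  have hApos : ∀ f : H, 0 ≤ ⟪A f, f⟫ := by
    intro f
    rw [hA]
    simp only [ContinuousLinearMap.comp_apply]
    rw [ContinuousLinearMap.adjoint_inner_left, PiLp.inner_apply]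
    refine Finset.sum_nonneg fun i _ => ?_
    rw [hDw]
    simp only [RCLike.inner_apply, conj_trivial]
    have : S f i * (w i * S f i) = w i * (S f i * S f i) := by ring
    rw [this]
    apply mul_nonneg
    · rw [hw]; exact ENNReal.toReal_nonneg
    · exact mul_self_nonneg _
  -- bound on B
  have hBapp : ∀ v : H, A (B v) + lam • B v = v := by
    intro v
    have := congrArg (fun T : H →L[ℝ] H => T v) hB₁
    simpa using this
  have hBnorm : ∀ v : H, ‖B v‖ ≤ ‖v‖ / lam := by
    intro v
    have h1 : lam * ‖B v‖ ^ 2 ≤ ⟪v, B v⟫ := by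
      have h2 : ⟪A (B v) + lam • B v, B v⟫ = ⟪v, B v⟫ := by rw [hBapp]
      rw [inner_add_left, real_inner_smul_left] at h2
      have h3 := hApos (B v)
      have h4 : ⟪B v, B v⟫ = ‖B v‖ ^ 2 := real_inner_self_eq_norm_sq _
      nlinarith
    have h5 : ⟪v, B v⟫ ≤ ‖v‖ * ‖B v‖ := real_inner_le_norm v (B v)
    rcases eq_or_lt_of_le (norm_nonneg (B v)) with h0 | h0
    · rw [← h0]
      positivity
    · rw [le_div_iff₀ hlam]
      nlinarith
  -- A u as a weighted sum
  have hAu : A u = ∑ i, (ρ (V i)).toReal • F (xp i) := by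
    rw [hA]
    simp only [ContinuousLinearMap.comp_apply]
    rw [Sadj]
    refine Finset.sum_congr rfl fun i _ => ?_
    rw [hDw, hS, hw, hF]
    simp only []
    rw [mul_smul]
  -- decompose the integral over the Voronoi cells
  have hLsum : L = ∑ i, ∫ y in V i, F y ∂ρ := by
    have hU : MeasurableSet (⋃ i, V i) := MeasurableSet.iUnion hmeasV
    have h1 : ∫ y in (⋃ i, V i), F y ∂ρ + ∫ y in (⋃ i, V i)ᶜ, F y ∂ρ = ∫ y, F y ∂ρ :=
      integral_add_compl hU hFint
    have h2 : ρ ((⋃ i, V i)ᶜ) = 0 := by rw [Set.compl_eq_univ_diff]; exact hbd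
    have h3 : ∫ y in (⋃ i, V i)ᶜ, F y ∂ρ = 0 := by
      rw [Measure.restrict_eq_zero.mpr h2, integral_zero_measure]
    have h4 : ∫ y in (⋃ i, V i), F y ∂ρ = ∑' i, ∫ y in V i, F y ∂ρ :=
      integral_iUnion hmeasV hdisj hFint.integrableOn
    rw [hLdef, ← h1, h3, add_zero, h4, tsum_fintype]
  -- per-cell estimate
  have hcell : ∀ i, ‖(ρ (V i)).toReal • F (xp i) - ∫ y in V i, F y ∂ρ‖ ≤
      (C0 * ‖u‖ * h) * (ρ (V i)).toReal := by
    intro i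
    have hc : (ρ (V i)).toReal • F (xp i) = ∫ _ in V i, F (xp i) ∂ρ :=
      (setIntegral_const _).symm
    have hconst : IntegrableOn (fun _ : X => F (xp i)) (V i) ρ :=
      integrableOn_const (measure_ne_top ρ _)
    rw [hc, ← integral_sub hconst hFint.integrableOn]
    have hb : ∀ y ∈ V i, ‖F (xp i) - F y‖ ≤ C0 * ‖u‖ * h := by
      intro y hy
      have h1 := (hLip u).dist_le_mul (xp i) y
      rw [← dist_eq_norm]
      have h2 : (Real.toNNReal (C0 * ‖u‖) : ℝ) = C0 * ‖u‖ :=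
        Real.coe_toNNReal _ (mul_nonneg hC0 (norm_nonneg u))
      rw [h2] at h1
      calc dist (F (xp i)) (F y)
          = dist (toFun u (xp i) • k (xp i)) (toFun u y • k y) := rfl
        _ ≤ C0 * ‖u‖ * dist (xp i) y := h1
        _ ≤ C0 * ‖u‖ * h := by
            exact mul_le_mul_of_nonneg_left (hdistV i y hy)
              (mul_nonneg hC0 (norm_nonneg u))
    exact norm_setIntegral_le_of_norm_le_const (measure_lt_top ρ _) hb
  -- total mass estimate
  have hsum : ∑ i, (ρ (V i)).toReal ≤ (ρ Set.univ).toReal := by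
    have h1 : ∑ i, ρ (V i) = ρ (⋃ i, V i) := by
      rw [measure_iUnion hdisj hmeasV, tsum_fintype]
    have h2 : (∑ i, ρ (V i)).toReal = ∑ i, (ρ (V i)).toReal :=
      ENNReal.toReal_sum fun i _ => measure_ne_top ρ _
    rw [← h2, h1]
    exact ENNReal.toReal_mono (measure_ne_top ρ _) (measure_mono (Set.subset_univ _))
  -- main estimate
  have hAuL : ‖A u - L‖ ≤ C0 * ‖u‖ * h * (ρ Set.univ).toReal := by
    rw [hAu, hLsum, ← Finset.sum_sub_distrib]
    calc ‖∑ i, ((ρ (V i)).toReal • F (xp i) - ∫ y in V i, F y ∂ρ)‖ ≤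
        ∑ i, ‖(ρ (V i)).toReal • F (xp i) - ∫ y in V i, F y ∂ρ‖ :=
        norm_sum_le _ _
      _ ≤ ∑ i, (C0 * ‖u‖ * h) * (ρ (V i)).toReal :=
        Finset.sum_le_sum fun i _ => hcell i
      _ = (C0 * ‖u‖ * h) * ∑ i, (ρ (V i)).toReal := by rw [← Finset.mul_sum]
      _ ≤ (C0 * ‖u‖ * h) * (ρ Set.univ).toReal := by
        exact mul_le_mul_of_nonneg_left hsum
          (mul_nonneg (mul_nonneg hC0 (norm_nonneg u)) hh0)
  -- inner product with L
  have hLinner : ∀ x : X, ⟪k x, L⟫ = ∫ y, K x y * toFun u y ∂ρ := by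
    intro x
    rw [hLdef, ← integral_inner (𝕜 := ℝ) hFint (k x)]
    congr 1
    funext y
    rw [hF]
    simp only []
    rw [real_inner_smul_right, ← hK, mul_comm]
  have hu_eval : ∀ y : X, toFun u y = toFun fstar y - toFun flam y := by
    intro y
    rw [← hrepro, ← hrepro, ← hrepro, hu, inner_sub_right]
  -- e is orthogonal to every k x
  have he0 : ∀ x : X, ⟪k x, e⟫ = 0 := by
    intro x
    rw [he, inner_sub_right, real_inner_smul_right, hrepro, hLinner]
    have h1 : ∫ y, K x y * toFun u y ∂ρ =
        (∫ y, K x y * toFun fstar y ∂ρ) - ∫ y, K x y * toFun flam y ∂ρ := by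
      rw [← integral_sub (hintK x fstar) (hintK x flam)]
      congr 1
      funext y
      rw [hu_eval]; ring
    rw [h1]
    have := hflam x
    linarith
  -- S e = 0, hence B e = lam⁻¹ • e
  have hSe : S e = 0 := by
    ext i
    rw [hS, ← hrepro, he0]
    rfl
  have hAe : A e = 0 := by
    rw [hA]
    simp only [ContinuousLinearMap.comp_apply, hSe, map_zero]
  have hBe : B e = lam⁻¹ • e := by
    have h1 := congrArg (fun T : H →L[ℝ] H => T e) hB₂
    simp only [ContinuousLinearMap.comp_apply, ContinuousLinearMap.add_apply,
      ContinuousLinearMap.coe_smul', Pi.smul_apply, ContinuousLinearMap.coe_id', id_eq] at h1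
    rw [hAe, zero_add] at h1
    have h2 : lam • B e = e := by rw [← B.map_smul]; exact h1
    rw [← inv_smul_smul₀ (ne_of_gt hlam) (B e), h2]
  -- identity for flam
  have hflam_id : B (A flam + lam • flam) = flam := by
    have h1 := congrArg (fun T : H →L[ℝ] H => T flam) hB₂
    simpa using h1
  -- the decomposition
  have hdecomp : B (ContinuousLinearMap.adjoint S (Dw (S fstar))) - flam =
      B (A u - L) - lam⁻¹ • e := by
    have h1 : A u - L - e = A fstar - (A flam + lam • flam) := by
      rw [hu, he, map_sub]
      abel
    rw [← hBe, ← map_sub, h1, map_sub, hflam_id]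
    congr 1
  -- putting it together
  have key : |toFun (B (ContinuousLinearMap.adjoint S (Dw (S fstar)))) t - toFun flam t| =
      |⟪k t, B (A u - L)⟫| := by
    rw [← hrepro, ← hrepro, ← inner_sub_right, hdecomp, inner_sub_right,
      real_inner_smul_right, he0, mul_zero, sub_zero]
  rw [key]
  calc |⟪k t, B (A u - L)⟫| ≤ ‖k t‖ * ‖B (A u - L)‖ := abs_real_inner_le_norm _ _
    _ ≤ κ * (‖A u - L‖ / lam) :=
        mul_le_mul (hkt t) (hBnorm _) (norm_nonneg _) hκ0
    _ ≤ κ * ((C0 * ‖u‖ * h * (ρ Set.univ).toReal) / lam) := by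
        exact mul_le_mul_of_nonneg_left ((div_le_div_iff_of_pos_right hlam).mpr hAuL) hκ0
    _ = (C0 / lam) * κ * ‖u‖ * h * (ρ Set.univ).toReal := by ring
end
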